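/- (Vinberg) Let V be a finite-dimensional module over a finite-dimensional Lie algebra q over a field k of characteristic 0, and let w ∈ V. Let q_w = {s ∈ q | s·w = 0} be the stabilizer of w, which acts naturally on the quotient module V̄ = V/(q·w), where q·w = {s·w : s ∈ q}. Then max over v ∈ V of dim(q·v) ≥ (max over η ∈ V̄ of dim(q_w·η)) + dim(q·w). -/

import Mathlib

open Module

section Defs

attribute [local instance] LieRing.ofAssociativeRing

variable (k : Type*) [Field k]
variable (q : Type*) [LieRing q] [LieAlgebra k q]
variable (V : Type*) [AddCommGroup V] [Module k V] [LieRingModule q V] [LieModule k q V]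

/-- The orbit map `s ↦ s · v` of a vector `v` in a Lie algebra module. -/
noncomputable def orbMap (v : V) : q →ₗ[k] V :=
  ((LieModule.toEnd k q V).toLinearMap).flip v

/-- The orbit `q · v = {s · v : s ∈ q}` of a vector `v`, as a submodule of `V`. -/
noncomputable def lieOrbit (v : V) : Submodule k V :=
  LinearMap.range (orbMap k q V v)

/-- The stabiliser `q_v = {s ∈ q | s · v = 0}` of a vector `v`. -/
noncomputable def lieVecStab (v : V) : Submodule k q :=
  LinearMap.ker (orbMap k q V v)

end Defs


open Module Polynomial Matrix

/-- A nonzero polynomial over an infinite field has a nonzero non-root. -/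
lemma exists_ne_zero_eval_ne_zero {k : Type*} [Field k] [Infinite k]
    {p : k[X]} (hp : p ≠ 0) : ∃ t : k, t ≠ 0 ∧ p.eval t ≠ 0 := by
  by_contra h
  push_neg at h
  have : (X * p : k[X]) = 0 := by
    apply Polynomial.zero_of_eval_zero
    intro x
    rcases eq_or_ne x 0 with rfl | hx
    · simp
    · simp [h x hx]
  rcases mul_eq_zero.mp this with h' | h'
  · exact Polynomial.X_ne_zero h'
  · exact hp h'

/-- Key linear-algebra lemma: for linear maps `f g : q → V` with `V` finite dimensional over
an infinite field, there is `t ≠ 0` with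
`rank f + rank (π ∘ g |_{ker f}) ≤ rank (f + t • g)`, where `π` is the quotient by `range f`. -/
lemma vinberg_aux {k q V : Type*} [Field k] [Infinite k]
    [AddCommGroup q] [Module k q]
    [AddCommGroup V] [Module k V] [FiniteDimensional k V]
    (f g : q →ₗ[k] V) :
    ∃ t : k, t ≠ 0 ∧
      finrank k ↥(Submodule.map (LinearMap.range f).mkQ
          (Submodule.map g (LinearMap.ker f))) +
        finrank k ↥(LinearMap.range f) ≤
      finrank k ↥(LinearMap.range (f + t • g)) := by
  classical
  set N : Submodule k V := LinearMap.range f with hN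
  set W2 : Submodule k (V ⧸ N) :=
    Submodule.map N.mkQ (Submodule.map g (LinearMap.ker f)) with hW2
  set d : ℕ := finrank k N with hd
  set e : ℕ := finrank k W2 with he
  -- choose preimages for a basis of `N`
  have bN : Basis (Fin d) k N := finBasis k N
  have hs : ∀ i : Fin d, ∃ s : q, f s = (bN i : V) := fun i => (bN i).2
  choose s hsf using hs
  -- choose preimages for a basis of `W2`
  have bW : Basis (Fin e) k W2 := finBasis k W2
  have hz : ∀ j : Fin e, ∃ z : q, z ∈ LinearMap.ker f ∧ N.mkQ (g z) = (bW j : V ⧸ N) := by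
    intro j
    have hmem : (bW j : V ⧸ N) ∈ Submodule.map N.mkQ (Submodule.map g (LinearMap.ker f)) :=
      (bW j).2
    rcases Submodule.mem_map.mp hmem with ⟨u, hu, hu2⟩
    rcases Submodule.mem_map.mp hu with ⟨zz, hzz, rfl⟩
    exact ⟨zz, hzz, hu2⟩
  choose z hzker hzval using hz
  -- the two families
  set y0 : Fin d ⊕ Fin e → V := Sum.elim (fun i => f (s i)) (fun j => g (z j)) with hy0def
  set yd : Fin d ⊕ Fin e → V := Sum.elim (fun i => g (s i)) (fun j => 0) with hyddef
  -- independence of `y0`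
  have hleft : LinearIndependent k (fun i : Fin d => f (s i)) := by
    have : (fun i : Fin d => f (s i)) = (fun i => (bN i : V)) := funext fun i => hsf i
    rw [this]
    exact bN.linearIndependent.map' N.subtype N.ker_subtype
  have hrightQ : LinearIndependent k (fun j : Fin e => N.mkQ (g (z j))) := by
    have : (fun j : Fin e => N.mkQ (g (z j))) = (fun j => (bW j : V ⧸ N)) :=
      funext fun j => hzval j
    rw [this]
    exact bW.linearIndependent.map' W2.subtype W2.ker_subtype
  have hright : LinearIndependent k (fun j : Fin e => g (z j)) :=
    hrightQ.of_comp N.mkQ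
  have hspanleft : Submodule.span k (Set.range fun i : Fin d => f (s i)) ≤ N := by
    rw [Submodule.span_le]
    rintro _ ⟨i, rfl⟩
    exact LinearMap.mem_range_self f (s i)
  have hdisj : Disjoint (Submodule.span k (Set.range fun i : Fin d => f (s i)))
      (Submodule.span k (Set.range fun j : Fin e => g (z j))) := by
    rw [disjoint_iff_inf_le]
    intro u hu
    obtain ⟨hu1, hu2⟩ := Submodule.mem_inf.mp hu
    have huN : u ∈ N := hspanleft hu1
    rw [Submodule.mem_span_range_iff_exists_fun] at hu2
    rcases hu2 with ⟨c, rfl⟩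
    have h0 : (Finset.univ.sum fun j => c j • N.mkQ (g (z j))) = 0 := by
      rw [show (Finset.univ.sum fun j => c j • N.mkQ (g (z j)))
          = N.mkQ (Finset.univ.sum fun j => c j • g (z j)) by
        rw [map_sum]; simp only [LinearMap.map_smul]]
      rw [Submodule.mkQ_apply, Submodule.Quotient.mk_eq_zero]
      exact huN
    have hc : ∀ j, c j = 0 := Fintype.linearIndependent_iff.mp hrightQ c h0
    simp [hc]
  have hy0 : LinearIndependent k y0 := hleft.sum_type hright hdisj
  -- dual coordinate functionals
  set W : Submodule k V := Submodule.span k (Set.range y0) with hWdef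
  set B0 : Basis (Fin d ⊕ Fin e) k W := Basis.span hy0 with hB0def
  obtain ⟨Φ, hΦ⟩ := LinearMap.exists_extend
    (B0.equivFun.toLinearMap : W →ₗ[k] (Fin d ⊕ Fin e → k))
  set φ : (Fin d ⊕ Fin e) → (V →ₗ[k] k) := fun a => (LinearMap.proj a).comp Φ with hφdef
  have hφval : ∀ a b : Fin d ⊕ Fin e, φ a (y0 b) = if b = a then 1 else 0 := by
    intro a b
    have hmem : y0 b ∈ W := Submodule.subset_span ⟨b, rfl⟩
    have h1 : Φ (y0 b) = B0.equivFun ⟨y0 b, hmem⟩ := by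
      conv_lhs => rw [show y0 b = W.subtype ⟨y0 b, hmem⟩ from rfl]
      rw [← LinearMap.comp_apply, hΦ]
      rfl
    have h2 : (⟨y0 b, hmem⟩ : W) = B0 b := by
      apply Subtype.ext
      rw [hB0def, Basis.span_apply]
    rw [hφdef]
    simp only [LinearMap.comp_apply, LinearMap.proj_apply, h1, h2]
    rw [Basis.equivFun_self]
  -- the polynomial determinant
  set M : Matrix (Fin d ⊕ Fin e) (Fin d ⊕ Fin e) k[X] :=
    fun a b => C (φ a (y0 b)) + X * C (φ a (yd b)) with hMdef
  have hMmap : ∀ (t : k) a b, (M.map (evalRingHom t)) a b = φ a (y0 b) + t * φ a (yd b) := by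
    intro t a b
    rw [Matrix.map_apply, hMdef]
    simp only [coe_evalRingHom, eval_add, eval_mul, eval_C, eval_X]
  have hM0 : M.map (evalRingHom (0 : k)) = 1 := by
    ext a b
    rw [hMmap, hφval a b, Matrix.one_apply]
    rcases eq_or_ne a b with rfl | hab
    · simp
    · simp [hab, Ne.symm hab]
  have hpne : M.det ≠ 0 := by
    intro hcontra
    have h := (evalRingHom (0 : k)).map_det M
    rw [RingHom.mapMatrix_apply, hM0, hcontra] at h
    simp at h
  obtain ⟨t, ht0, htp⟩ := exists_ne_zero_eval_ne_zero hpne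
  refine ⟨t, ht0, ?_⟩
  -- matrix at time `t` is invertible, hence `yt` is independent
  set yt : Fin d ⊕ Fin e → V := fun b => y0 b + t • yd b with hytdef
  set Nt : Matrix (Fin d ⊕ Fin e) (Fin d ⊕ Fin e) k := M.map (evalRingHom t) with hNtdef
  have hNt : ∀ a b, Nt a b = φ a (yt b) := by
    intro a b
    rw [hNtdef, hMmap t a b, hytdef]
    simp only [map_add, LinearMap.map_smul, smul_eq_mul]
  have hNtdet : IsUnit Nt := by
    rw [Matrix.isUnit_iff_isUnit_det, hNtdef, ← RingHom.mapMatrix_apply,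
      ← (evalRingHom t).map_det]
    simpa using isUnit_iff_ne_zero.mpr htp
  have hcols : LinearIndependent k (fun b => Ntᵀ b) :=
    Matrix.linearIndependent_cols_iff_isUnit.mpr hNtdet
  have hyt : LinearIndependent k yt := by
    apply LinearIndependent.of_comp (LinearMap.pi φ : V →ₗ[k] (Fin d ⊕ Fin e → k))
    have hfun : ((LinearMap.pi φ : V →ₗ[k] (Fin d ⊕ Fin e → k)) ∘ yt) = fun b => Ntᵀ b := by
      funext b a
      simp only [Function.comp_apply, LinearMap.pi_apply, Matrix.transpose_apply, hNt a b]
    rw [hfun]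
    exact hcols
  -- each `yt b` lies in the range of `f + t • g`
  have hmem : ∀ b : Fin d ⊕ Fin e, yt b ∈ LinearMap.range (f + t • g) := by
    rintro (i | j)
    · exact ⟨s i, by simp [hytdef, hy0def, hyddef]⟩
    · have hfz : (f + t • g) (z j) = t • g (z j) := by
        have h0 : f (z j) = 0 := hzker j
        simp [h0]
      refine ⟨t⁻¹ • z j, ?_⟩
      rw [LinearMap.map_smul, hfz, smul_smul, inv_mul_cancel₀ ht0, one_smul]
      simp [hytdef, hy0def, hyddef]
  -- conclude
  have hyt' : LinearIndependent k
      (fun b => (⟨yt b, hmem b⟩ : LinearMap.range (f + t • g))) := by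
    apply LinearIndependent.of_comp (LinearMap.range (f + t • g)).subtype
    exact hyt
  have hcard := hyt'.fintype_card_le_finrank
  simpa [add_comm] using hcard


/-- (Vinberg) Let `V` be a finite-dimensional module over a finite-dimensional Lie algebra `q`
over a field of characteristic zero and let `w ∈ V`.  The stabiliser `q_w` acts naturally on
the quotient module `V̄ = V / (q · w)`, the orbit of the class of `v ∈ V` being the image in
`V̄` of `{s · v : s ∈ q_w}`.  Then
`max over v ∈ V of dim (q · v) ≥ (max over η ∈ V̄ of dim (q_w · η)) + dim (q · w)`. -/
theorem vinberg_orbit_inequality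
    (k : Type*) [Field k] [CharZero k]
    (q : Type*) [LieRing q] [LieAlgebra k q] [FiniteDimensional k q]
    (V : Type*) [AddCommGroup V] [Module k V] [LieRingModule q V] [LieModule k q V]
    [FiniteDimensional k V] (w : V) :
    (⨆ v : V, Module.finrank k
        ↥(Submodule.map (lieOrbit k q V w).mkQ
            (Submodule.map (orbMap k q V v) (lieVecStab k q V w)))) +
      Module.finrank k ↥(lieOrbit k q V w) ≤
    ⨆ v : V, Module.finrank k ↥(lieOrbit k q V v) := by
  classical
  have hinf : Infinite k := inferInstance
  set A : V → ℕ := fun v => Module.finrank k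
      ↥(Submodule.map (lieOrbit k q V w).mkQ
          (Submodule.map (orbMap k q V v) (lieVecStab k q V w))) with hA
  set B : V → ℕ := fun v => Module.finrank k ↥(lieOrbit k q V v) with hB
  have key : ∀ v : V, ∃ u : V, A v + Module.finrank k ↥(lieOrbit k q V w) ≤ B u := by
    intro v
    obtain ⟨t, ht0, hle⟩ := vinberg_aux (orbMap k q V w) (orbMap k q V v)
    refine ⟨w + t • v, ?_⟩
    have horb : orbMap k q V (w + t • v) = orbMap k q V w + t • orbMap k q V v := by
      ext sx
      simp [orbMap]
    have goal_eq : lieOrbit k q V (w + t • v)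
        = LinearMap.range (orbMap k q V w + t • orbMap k q V v) := by
      show LinearMap.range (orbMap k q V (w + t • v)) = _
      rw [horb]
    rw [hA, hB]
    simp only
    rw [goal_eq]
    exact hle
  have hnV : Nonempty V := ⟨0⟩
  have hbB : BddAbove (Set.range B) := by
    refine ⟨Module.finrank k V, ?_⟩
    rintro _ ⟨v, rfl⟩
    exact Submodule.finrank_le _
  have hbA : BddAbove (Set.range A) := by
    refine ⟨Module.finrank k (V ⧸ lieOrbit k q V w), ?_⟩
    rintro _ ⟨v, rfl⟩
    exact Submodule.finrank_le _
  obtain ⟨v0, hv0⟩ : ∃ v0 : V, A v0 = ⨆ v, A v := by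
    have hmem := Nat.sSup_mem (Set.range_nonempty A) hbA
    rcases hmem with ⟨v0, hv0⟩
    exact ⟨v0, hv0⟩
  rw [← hv0]
  obtain ⟨u, hu⟩ := key v0
  exact hu.trans (le_ciSup hbB u)
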